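/- Let U, V be unitaries on C^d (d an odd prime) forming a conjugate pair (U^d = V^d = I, UV = ωVU), with neither U nor V a scalar multiple of a Pauli gate. If the Pauli support of U is contained in a horizontal line {(p, q₀) : p} and the Pauli support of V is contained in a vertical line {(p₀, q) : q} of Z_d², then a contradiction follows; i.e., no such pair exists. -/

import Mathlib

open Matrix

noncomputable section

/-- ω = e^{2πi/d}, the primitive d-th root of unity. -/
def om (d : ℕ) : ℂ := Complex.exp (2 * Real.pi * Complex.I / d)

/-- The qudit Pauli Z gate: Z|z⟩ = ω^z |z⟩. -/
def Zg (d : ℕ) : Matrix (ZMod d) (ZMod d) ℂ :=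
  Matrix.diagonal fun z => om d ^ z.val

/-- The qudit Pauli X (shift) gate: X|z⟩ = |z+1⟩. -/
def Xg (d : ℕ) : Matrix (ZMod d) (ZMod d) ℂ :=
  fun i j => if i = j + 1 then 1 else 0

/-- The Weyl operator W(p,q) = ω^{-2⁻¹ p q} Z^p X^q. -/
def Wg (d : ℕ) [NeZero d] (p q : ZMod d) : Matrix (ZMod d) (ZMod d) ℂ :=
  om d ^ ((-(2 : ZMod d)⁻¹ * p * q).val) • (Zg d ^ p.val * Xg d ^ q.val)

/-- Pauli coefficient f_M(p,q) = d⁻¹ Tr(W(-p,-q) M). -/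
def fM (d : ℕ) [NeZero d] (M : Matrix (ZMod d) (ZMod d) ℂ) (p q : ZMod d) : ℂ :=
  (d : ℂ)⁻¹ * (Wg d (-p) (-q) * M).trace

end
noncomputable section

lemma om_prim (d : ℕ) [NeZero d] : IsPrimitiveRoot (om d) d := by
  have := Complex.isPrimitiveRoot_exp d (NeZero.ne d)
  convert this using 2
  rfl

lemma om_ne_zero (d : ℕ) : om d ≠ 0 := Complex.exp_ne_zero _

lemma om_pow_d (d : ℕ) [NeZero d] : om d ^ d = 1 := (om_prim d).pow_eq_one

def ee (d : ℕ) (x : ZMod d) : ℂ := om d ^ x.val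

lemma om_pow_mod (d : ℕ) [NeZero d] (n : ℕ) : om d ^ (n % d) = om d ^ n := by
  conv_rhs => rw [← Nat.div_add_mod n d, pow_add, pow_mul, om_pow_d, one_pow, one_mul]

lemma ee_add (d : ℕ) [NeZero d] (x y : ZMod d) : ee d (x + y) = ee d x * ee d y := by
  rw [ee, ee, ee, ← pow_add, ZMod.val_add, om_pow_mod]

lemma ee_zero (d : ℕ) [NeZero d] : ee d 0 = 1 := by simp [ee]

lemma ee_ne_zero (d : ℕ) (x : ZMod d) : ee d x ≠ 0 := pow_ne_zero _ (om_ne_zero d)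

lemma ee_pow (d : ℕ) [NeZero d] (x : ZMod d) (n : ℕ) : ee d x ^ n = ee d ((n : ZMod d) * x) := by
  induction n with
  | zero => simp [ee_zero]
  | succ n ih => rw [pow_succ, ih, ← ee_add]; push_cast; ring_nf

lemma ee_natCast_val (d : ℕ) [NeZero d] (x y : ZMod d) : ee d x ^ y.val = ee d (y * x) := by
  rw [ee_pow]; congr 1; simp [ZMod.natCast_val, ZMod.cast_id]

lemma ee_eq_one_iff (d : ℕ) [NeZero d] (x : ZMod d) : ee d x = 1 ↔ x = 0 := by
  rw [ee, (om_prim d).pow_eq_one_iff_dvd]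
  constructor
  · intro h
    rcases Nat.eq_zero_of_dvd_of_lt h x.val_lt with h2
    exact (ZMod.val_eq_zero x).mp h2
  · rintro rfl; simp

lemma sum_ee (d : ℕ) [NeZero d] (x : ZMod d) :
    ∑ p : ZMod d, ee d (p * x) = if x = 0 then (d : ℂ) else 0 := by
  by_cases hx : x = 0
  · simp [hx, ee_zero, Finset.card_univ]
  · rw [if_neg hx]
    have h1 : ∀ p : ZMod d, ee d (p * x) = ee d x ^ p.val := fun p => (ee_natCast_val d x p).symm
    simp only [h1]
    have h2 : ∑ p : ZMod d, ee d x ^ p.val = ∑ i ∈ Finset.range d, ee d x ^ i := by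
      refine Finset.sum_nbij' (fun p => p.val) (fun i => (i : ZMod d)) ?_ ?_ ?_ ?_ ?_
      · simp [ZMod.val_lt]
      · simp
      · simp [ZMod.natCast_val, ZMod.cast_id]
      · intro a ha
        simp only [Finset.mem_range] at ha
        exact ZMod.val_cast_of_lt ha
      · simp
    rw [h2, geom_sum_eq (fun h => hx ((ee_eq_one_iff d x).mp h))]
    have : ee d x ^ d = 1 := by rw [ee_pow]; simp [ee_zero]
    rw [this, sub_self, zero_div]

lemma Xg_pow_apply (d : ℕ) [NeZero d] (b : ℕ) (i j : ZMod d) :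
    (Xg d ^ b) i j = if i = j + (b : ZMod d) then 1 else 0 := by
  induction b generalizing i j with
  | zero => simp [Matrix.one_apply]
  | succ n ih =>
    rw [pow_succ, Matrix.mul_apply]
    simp only [Xg, mul_ite, mul_one, mul_zero]
    rw [Finset.sum_ite_eq' Finset.univ (j + 1) (fun k => (Xg d ^ n) i k)]
    simp only [Finset.mem_univ, if_true, ih]
    congr 2
    push_cast
    ring

lemma Zg_pow_apply (d : ℕ) [NeZero d] (a : ℕ) (i j : ZMod d) :
    (Zg d ^ a) i j = if i = j then ee d ((a : ZMod d) * i) else 0 := by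
  rw [Zg, Matrix.diagonal_pow, Matrix.diagonal_apply]
  congr 1
  rw [Pi.pow_apply, ← ee, ee_pow]

lemma ZX_apply (d : ℕ) [NeZero d] (a b : ℕ) (i j : ZMod d) :
    (Zg d ^ a * Xg d ^ b) i j = if i = j + (b : ZMod d) then ee d ((a : ZMod d) * i) else 0 := by
  rw [Matrix.mul_apply]
  simp only [Zg_pow_apply, Xg_pow_apply, ite_mul, zero_mul, mul_ite, mul_one, mul_zero]
  rw [Finset.sum_ite_eq' Finset.univ (j + (b:ZMod d)) (fun k => if i = k then ee d ((a : ZMod d) * i) else 0)]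
  simp

lemma fM_eq (d : ℕ) [NeZero d] (M : Matrix (ZMod d) (ZMod d) ℂ) (p q : ZMod d) :
    fM d M p q = ((d : ℂ)⁻¹ * om d ^ ((-(2 : ZMod d)⁻¹ * -p * -q).val)) *
      ∑ k : ZMod d, ee d (-p * (k - q)) * M k (k - q) := by
  rw [fM, Wg, Matrix.smul_mul, Matrix.trace_smul, smul_eq_mul]
  have htr : ((Zg d ^ (-p).val * Xg d ^ (-q).val) * M).trace
      = ∑ k : ZMod d, ee d (-p * (k - q)) * M k (k - q) := by
    rw [Matrix.trace]
    have hdiag : ∀ i : ZMod d, ((Zg d ^ (-p).val * Xg d ^ (-q).val) * M).diag i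
        = ∑ k : ZMod d, (if i = k + (-q) then ee d (-p * i) else 0) * M k i := by
      intro i
      rw [Matrix.diag_apply, Matrix.mul_apply]
      apply Finset.sum_congr rfl
      intro k _
      rw [ZX_apply]
      congr 2
      · rw [ZMod.natCast_val, ZMod.cast_id]
      · rw [ZMod.natCast_val, ZMod.cast_id]
    rw [Finset.sum_congr rfl (fun i _ => hdiag i), Finset.sum_comm]
    apply Finset.sum_congr rfl
    intro k _
    simp only [ite_mul, zero_mul]
    rw [Finset.sum_ite_eq' Finset.univ (k + (-q)) (fun i => ee d (-p * i) * M k i)]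
    simp only [Finset.mem_univ, if_true]
    rw [sub_eq_add_neg]
  rw [htr]
  ring

lemma inversion (d : ℕ) [NeZero d] (M : Matrix (ZMod d) (ZMod d) ℂ) (i j : ZMod d) :
    (d : ℂ) * M i j =
      ∑ p : ZMod d, ee d (p * j) * ∑ k : ZMod d, ee d (-p * (k - (i - j))) * M k (k - (i - j)) := by
  have key : ∀ p k : ZMod d, ee d (p * j) * (ee d (-p * (k - (i - j))) * M k (k - (i - j)))
      = ee d (p * (i - k)) * M k (k - (i - j)) := by
    intro p k
    rw [← mul_assoc, ← ee_add]
    congr 2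
    ring
  simp only [Finset.mul_sum, key]
  rw [Finset.sum_comm]
  have : ∀ k : ZMod d, ∑ p : ZMod d, ee d (p * (i - k)) * M k (k - (i - j))
      = (if i - k = 0 then (d : ℂ) else 0) * M k (k - (i - j)) := by
    intro k
    rw [← Finset.sum_mul, sum_ee]
  rw [Finset.sum_congr rfl (fun k _ => this k)]
  have : ∀ k : ZMod d, (if i - k = 0 then (d : ℂ) else 0) * M k (k - (i - j))
      = if i = k then (d : ℂ) * M k (k - (i - j)) else 0 := by
    intro k
    by_cases h : i = k <;> simp [h, sub_eq_zero]
  rw [Finset.sum_congr rfl (fun k _ => this k),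
    Finset.sum_ite_eq Finset.univ i (fun k => (d : ℂ) * M k (k - (i - j)))]
  simp only [Finset.mem_univ, if_true, sub_sub_cancel]

lemma coef_ne_zero (d : ℕ) [NeZero d] (n : ℕ) : ((d : ℂ)⁻¹ * om d ^ n) ≠ 0 :=
  mul_ne_zero (inv_ne_zero (Nat.cast_ne_zero.mpr (NeZero.ne d))) (pow_ne_zero _ (om_ne_zero d))

lemma dC_ne_zero (d : ℕ) [NeZero d] : (d : ℂ) ≠ 0 := Nat.cast_ne_zero.mpr (NeZero.ne d)

lemma supp_horizontal (d : ℕ) [NeZero d] (U : Matrix (ZMod d) (ZMod d) ℂ) (q₀ : ZMod d)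
    (h : ∀ p q : ZMod d, fM d U p q ≠ 0 → q = q₀) (i j : ZMod d) (hij : i ≠ j + q₀) :
    U i j = 0 := by
  have hq : i - j ≠ q₀ := fun hh => hij (by rw [← hh]; ring)
  have hS : ∀ p : ZMod d, ∑ k : ZMod d, ee d (-p * (k - (i - j))) * U k (k - (i - j)) = 0 := by
    intro p
    have h0 : fM d U p (i - j) = 0 := by
      by_contra hne; exact hq (h p (i - j) hne)
    rw [fM_eq] at h0
    exact (mul_eq_zero.mp h0).resolve_left (coef_ne_zero d _)
  have hinv := inversion d U i j
  simp only [hS, mul_zero, Finset.sum_const_zero] at hinv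
  exact (mul_eq_zero.mp hinv).resolve_left (dC_ne_zero d)

lemma supp_vertical (d : ℕ) [NeZero d] (V : Matrix (ZMod d) (ZMod d) ℂ) (p₀ : ZMod d)
    (h : ∀ p q : ZMod d, fM d V p q ≠ 0 → p = p₀) (i j : ZMod d) :
    V i j = ee d (p₀ * j) * V (i - j) 0 := by
  have hS : ∀ p q : ZMod d, p ≠ p₀ →
      ∑ k : ZMod d, ee d (-p * (k - q)) * V k (k - q) = 0 := by
    intro p q hp
    have h0 : fM d V p q = 0 := by
      by_contra hne; exact hp (h p q hne)
    rw [fM_eq] at h0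
    exact (mul_eq_zero.mp h0).resolve_left (coef_ne_zero d _)
  have h1 := inversion d V i j
  have h2 := inversion d V (i - j) 0
  rw [Finset.sum_eq_single p₀ (fun p _ hp => by rw [hS p _ hp, mul_zero]) (by simp)] at h1
  rw [Finset.sum_eq_single p₀ (fun p _ hp => by rw [hS p _ hp, mul_zero]) (by simp)] at h2
  simp only [mul_zero, ee_zero, one_mul, sub_zero] at h2
  rw [← h2, ← mul_assoc, mul_comm (ee d (p₀ * j)) (d : ℂ), mul_assoc] at h1
  exact mul_left_cancel₀ (dC_ne_zero d) h1

end

/-- No conjugate pair (U,V) of non-Pauli unitaries exists with the Pauli support of U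
contained in a horizontal line and that of V contained in a vertical line. -/
theorem no_horizontal_vertical_pair (d : ℕ) (hd : Nat.Prime d) (hodd : Odd d) [NeZero d]
    (U V : Matrix (ZMod d) (ZMod d) ℂ)
    (hU : U ∈ Matrix.unitaryGroup (ZMod d) ℂ)
    (hV : V ∈ Matrix.unitaryGroup (ZMod d) ℂ)
    (hUd : U ^ d = 1) (hVd : V ^ d = 1)
    (hcomm : U * V = om d • (V * U))
    (hUnp : ¬ ∃ (c : ℂ) (p q : ZMod d), U = c • (Zg d ^ p.val * Xg d ^ q.val))
    (hVnp : ¬ ∃ (c : ℂ) (p q : ZMod d), V = c • (Zg d ^ p.val * Xg d ^ q.val))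
    (q₀ p₀ : ZMod d)
    (hUline : ∀ p q : ZMod d, fM d U p q ≠ 0 → q = q₀)
    (hVline : ∀ p q : ZMod d, fM d V p q ≠ 0 → p = p₀) :
    False := by
  haveI := Fact.mk hd
  have hU0 : ∀ i j : ZMod d, i ≠ j + q₀ → U i j = 0 :=
    fun i j => supp_horizontal d U q₀ hUline i j
  have hV1 : ∀ i j : ZMod d, V i j = ee d (p₀ * j) * V (i - j) 0 :=
    supp_vertical d V p₀ hVline
  set u : ZMod d → ℂ := fun i => U i (i - q₀) with hu
  set a : ZMod d → ℂ := fun m => V m 0 with ha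
  -- u is nonvanishing
  have hUU : U * star U = 1 := Matrix.mem_unitaryGroup_iff.mp hU
  have hune : ∀ i : ZMod d, u i ≠ 0 := by
    intro i hzero
    have h11 : (U * star U) i i = (1 : Matrix (ZMod d) (ZMod d) ℂ) i i := by rw [hUU]
    rw [Matrix.mul_apply, Matrix.one_apply_eq] at h11
    have hterm : ∀ k : ZMod d, U i k * (star U) k i = 0 := by
      intro k
      by_cases hk : k = i - q₀
      · subst hk
        rw [show U i (i - q₀) = u i from rfl, hzero, zero_mul]
      · rw [hU0 i k (fun hh => hk (by rw [hh]; ring)), zero_mul]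
    rw [Finset.sum_congr rfl (fun k _ => hterm k), Finset.sum_const_zero] at h11
    exact zero_ne_one h11
  -- a is not identically zero
  have hVV : star V * V = 1 := Matrix.mem_unitaryGroup_iff'.mp hV
  have hax : ∃ m : ZMod d, a m ≠ 0 := by
    by_contra hall
    push_neg at hall
    have h00 : (star V * V) 0 0 = (1 : Matrix (ZMod d) (ZMod d) ℂ) 0 0 := by rw [hVV]
    rw [Matrix.mul_apply, Matrix.one_apply_eq] at h00
    have hterm : ∀ k : ZMod d, (star V) 0 k * V k 0 = 0 := by
      intro k
      rw [show V k 0 = a k from rfl, hall k, mul_zero]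
    rw [Finset.sum_congr rfl (fun k _ => hterm k), Finset.sum_const_zero] at h00
    exact zero_ne_one h00
  -- the commutation relation, entrywise
  have hE : ∀ i j : ZMod d, u i * (ee d (p₀ * j) * a (i - j - q₀))
      = om d * (ee d (p₀ * (j + q₀)) * a (i - j - q₀) * u (j + q₀)) := by
    intro i j
    have h0 : (U * V) i j = (om d • (V * U)) i j := by rw [hcomm]
    rw [Matrix.smul_apply, Matrix.mul_apply, Matrix.mul_apply, smul_eq_mul] at h0
    rw [Finset.sum_eq_single (i - q₀)
      (fun k _ hk => by rw [hU0 i k (fun hh => hk (by rw [hh]; ring)), zero_mul])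
      (by simp)] at h0
    rw [Finset.sum_eq_single (j + q₀)
      (fun k _ hk => by rw [hU0 k j hk, mul_zero])
      (by simp)] at h0
    rw [hV1 (i - q₀) j, hV1 i (j + q₀)] at h0
    rw [show i - q₀ - j = i - j - q₀ by ring, show i - (j + q₀) = i - j - q₀ by ring] at h0
    rw [show U (j + q₀) j = u (j + q₀) by rw [hu]; simp] at h0
    exact h0
  -- key consequence
  have hE' : ∀ (m i : ZMod d), a m ≠ 0 → u i = (om d * ee d (p₀ * q₀)) * u (i - m) := by
    intro m i ham
    have h0 := hE i (i - m - q₀)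
    rw [show i - (i - m - q₀) - q₀ = m by ring] at h0
    rw [show i - m - q₀ + q₀ = i - m by ring] at h0
    have hee : ee d (p₀ * (i - m)) = ee d (p₀ * (i - m - q₀)) * ee d (p₀ * q₀) := by
      rw [← ee_add]; congr 1; ring
    rw [hee] at h0
    have h2 : u i * (ee d (p₀ * (i - m - q₀)) * a m)
        = ((om d * ee d (p₀ * q₀)) * u (i - m)) * (ee d (p₀ * (i - m - q₀)) * a m) := by
      rw [h0]; ring
    exact mul_right_cancel₀ (mul_ne_zero (ee_ne_zero d _) ham) h2
  by_cases huniq : ∀ m₁ m₂ : ZMod d, a m₁ ≠ 0 → a m₂ ≠ 0 → m₁ = m₂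
  · -- V is a Pauli
    obtain ⟨m, ham⟩ := hax
    apply hVnp
    refine ⟨a m * ee d (-(p₀ * m)), p₀, m, ?_⟩
    ext i j
    rw [Matrix.smul_apply, ZX_apply, smul_eq_mul, ZMod.natCast_val, ZMod.cast_id,
      ZMod.natCast_val, ZMod.cast_id]
    by_cases hij : i = j + m
    · rw [if_pos hij, hV1 i j, show i - j = m by rw [hij]; ring]
      rw [mul_assoc, ← ee_add, show -(p₀ * m) + p₀ * i = p₀ * j by rw [hij]; ring]
      ring
    · rw [if_neg hij, mul_zero, hV1 i j]
      have haz : a (i - j) = 0 := by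
        by_contra hne
        exact hij (by rw [show m = i - j from (huniq (i - j) m hne ham).symm]; ring)
      rw [show V (i - j) 0 = a (i - j) from rfl, haz, mul_zero]
  · -- U is a Pauli
    push_neg at huniq
    obtain ⟨m₁, m₂, h1, h2, hne⟩ := huniq
    have hshift : ∀ x : ZMod d, u (x + (m₂ - m₁)) = u x := by
      intro x
      have e1 := hE' m₁ (x + m₂) h1
      have e2 := hE' m₂ (x + m₂) h2
      rw [show x + m₂ - m₂ = x by ring] at e2
      rw [show x + m₂ - m₁ = x + (m₂ - m₁) by ring] at e1
      exact mul_left_cancel₀ (mul_ne_zero (om_ne_zero d) (ee_ne_zero d _)) (e1.symm.trans e2)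
    have hconst : ∀ x : ZMod d, u x = u 0 := by
      have hn : ∀ n : ℕ, u ((n : ZMod d) * (m₂ - m₁)) = u 0 := by
        intro n
        induction n with
        | zero => simp
        | succ n ih =>
          rw [show ((n + 1 : ℕ) : ZMod d) * (m₂ - m₁)
            = (n : ZMod d) * (m₂ - m₁) + (m₂ - m₁) by push_cast; ring, hshift, ih]
      intro x
      have hδ : (m₂ - m₁) ≠ 0 := sub_ne_zero.mpr (Ne.symm hne)
      have hx : (((x * (m₂ - m₁)⁻¹).val : ZMod d)) * (m₂ - m₁) = x := by
        rw [ZMod.natCast_val, ZMod.cast_id, mul_assoc, inv_mul_cancel₀ hδ, mul_one]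
      rw [← hx, hn]
    apply hUnp
    refine ⟨u 0, 0, q₀, ?_⟩
    ext i j
    rw [Matrix.smul_apply, ZMod.val_zero, ZX_apply, smul_eq_mul, ZMod.natCast_val,
      ZMod.cast_id]
    by_cases hij : i = j + q₀
    · rw [if_pos hij]
      rw [show U i j = u i by rw [hu]; simp only; rw [show i - q₀ = j by rw [hij]; ring]]
      rw [hconst i]
      push_cast
      rw [zero_mul, ee_zero, mul_one]
    · rw [if_neg hij, hU0 i j hij]
      simp
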